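/- Let U be a unitary operator on a Hilbert space H and A ∈ L(H) with adjoint A*. If sup_{Im μ ≠ 0} ‖A R_U(μ) A*‖_{L(H)} < ∞, then A is U-smooth; in particular there is a constant C such that Σ_{t∈Z} ‖A U^t φ‖²_H ≤ C ‖φ‖²_H for all φ ∈ H. -/

import Mathlib

noncomputable section

open scoped ENNReal NNReal
open Complex

namespace KS

variable {H : Type*} [NormedAddCommGroup H] [InnerProductSpace ℂ H] [CompleteSpace H]

/-- `Res` is the resolvent family of the unitary `U`:
for `Im μ ≠ 0`, `Res μ = (Ue^{−iμ} − 1)⁻¹`. -/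
def IsResolventFamily (U : H ≃ₗᵢ[ℂ] H) (Res : ℂ → H →L[ℂ] H) : Prop :=
  ∀ μ : ℂ, μ.im ≠ 0 →
    (∀ φ : H, Complex.exp (-μ * Complex.I) • U (Res μ φ) - Res μ φ = φ) ∧
    (∀ φ : H, Res μ (Complex.exp (-μ * Complex.I) • U φ - φ) = φ)

end KS

set_option linter.unusedSectionVars false

namespace KSP
set_option linter.unusedSectionVars false
variable {H : Type*} [NormedAddCommGroup H] [InnerProductSpace ℂ H] [CompleteSpace H]

local notation "⟪" x ", " y "⟫" => @inner ℂ _ _ x y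

lemma zpow_apply_add (U : H ≃ₗᵢ[ℂ] H) (a b : ℤ) (x : H) :
    (U ^ (a + b)) x = (U ^ a) ((U ^ b) x) := by rw [zpow_add]; rfl

lemma zpow_norm (U : H ≃ₗᵢ[ℂ] H) (a : ℤ) (x : H) : ‖(U ^ a) x‖ = ‖x‖ :=
  (U ^ a).norm_map x

lemma inner_zpow (U : H ≃ₗᵢ[ℂ] H) (a b : ℤ) (x y : H) :
    ⟪(U ^ a) x, (U ^ b) y⟫ = ⟪x, (U ^ (b - a)) y⟫ := by
  have hab : a + (b - a) = b := by omega
  have e : (U ^ a) ((U ^ (b - a)) y) = (U ^ b) y := by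
    rw [← zpow_apply_add, hab]
  rw [← e, (U ^ a).inner_map_map]

lemma im_mu_ne {z : ℂ} (hz0 : z ≠ 0) (hz1 : ‖z‖ ≠ 1) :
    (Complex.I * Complex.log z).im ≠ 0 := by
  have : (Complex.I * Complex.log z).im = Real.log ‖z‖ := by
    simp [Complex.mul_im, Complex.log_re]
  rw [this]
  intro h
  rcases Real.log_eq_zero.mp h with h' | h' | h'
  · exact hz0 (norm_eq_zero.mp h')
  · exact hz1 h'
  · have := norm_nonneg z; linarith

lemma exp_neg_mu_I {z : ℂ} (hz0 : z ≠ 0) :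
    Complex.exp (-(Complex.I * Complex.log z) * Complex.I) = z := by
  have h2 : -(Complex.I * Complex.log z) * Complex.I = Complex.log z := by
    linear_combination (-(Complex.log z)) * Complex.I_sq
  rw [h2, Complex.exp_log hz0]

lemma res_eq {U : H ≃ₗᵢ[ℂ] H} {Res : ℂ → H →L[ℂ] H}
    (hRes : ∀ μ : ℂ, μ.im ≠ 0 →
      (∀ φ : H, Complex.exp (-μ * Complex.I) • U (Res μ φ) - Res μ φ = φ) ∧
      (∀ φ : H, Res μ (Complex.exp (-μ * Complex.I) • U φ - φ) = φ))
    {z : ℂ} (hz0 : z ≠ 0) (hz1 : ‖z‖ ≠ 1)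
    {ψ S : H} (h : z • U S - S = ψ) :
    Res (Complex.I * Complex.log z) ψ = S := by
  have him := im_mu_ne hz0 hz1
  have h2 := (hRes _ him).2 S
  rw [exp_neg_mu_I hz0, h] at h2
  exact h2


variable {U : H ≃ₗᵢ[ℂ] H} {Res : ℂ → H →L[ℂ] H}

def RCond (U : H ≃ₗᵢ[ℂ] H) (Res : ℂ → H →L[ℂ] H) : Prop :=
  ∀ μ : ℂ, μ.im ≠ 0 →
    (∀ φ : H, Complex.exp (-μ * Complex.I) • U (Res μ φ) - Res μ φ = φ) ∧
    (∀ φ : H, Res μ (Complex.exp (-μ * Complex.I) • U φ - φ) = φ)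

lemma hasSum_res_lt (hRes : RCond U Res) {z : ℂ} (hz0 : z ≠ 0)
    (hz : ‖z‖ < 1) (ψ : H) :
    HasSum (fun n : ℕ => z ^ n • (U ^ (n : ℤ)) ψ)
      (-(Res (Complex.I * Complex.log z) ψ)) := by
  set f : ℕ → H := fun n => z ^ n • (U ^ (n : ℤ)) ψ with hf
  have hnorm : ∀ n, ‖f n‖ = ‖z‖ ^ n * ‖ψ‖ := by
    intro n
    simp [hf, norm_smul, zpow_norm]
  have hsum : Summable f := by
    apply Summable.of_norm
    simp only [hnorm]
    exact (summable_geometric_of_lt_one (norm_nonneg z) hz).mul_right _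
  obtain ⟨S, hS⟩ := hsum
  have hU : HasSum (fun n => z • U (f n)) (z • U S) :=
    ((U.toLinearIsometry.toContinuousLinearMap.hasSum hS).const_smul z)
  have hshift : ∀ n : ℕ, z • U (f n) = f (n + 1) := by
    intro n
    have hUU : U ((U ^ (n : ℤ)) ψ) = (U ^ ((n : ℕ) + 1 : ℤ)) ψ := by
      have : ((n : ℕ) + 1 : ℤ) = 1 + (n : ℤ) := by omega
      rw [this, zpow_apply_add, zpow_one]
    simp only [hf, smul_smul]
    rw [map_smul]  -- U (z^n • x) = z^n • U x
    rw [smul_smul, hUU]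
    push_cast
    ring_nf
  have hU' : HasSum (fun n => f (n + 1)) (z • U S) := by
    simpa only [hshift] using hU
  have hU'' : HasSum (fun n => f (n + 1)) (S - f 0) := by
    have := (hasSum_nat_add_iff' (f := f) 1).mpr hS
    simpa using this
  have hEq : z • U S = S - f 0 := hU'.unique hU''
  have hf0 : f 0 = ψ := by simp [hf]
  have hRes' : Res (Complex.I * Complex.log z) ψ = -S := by
    apply res_eq hRes hz0 (ne_of_lt hz)
    have h3 : z • U (-S) - -S = -(z • U S) + S := by rw [map_neg, smul_neg]; abel
    rw [h3, hEq, hf0]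
    abel
  rw [hRes', neg_neg]
  exact hS

lemma hasSum_res_gt (hRes : RCond U Res) {z : ℂ}
    (hz : 1 < ‖z‖) (ψ : H) :
    HasSum (fun n : ℕ => z ^ (-((n : ℤ) + 1)) • (U ^ (-((n : ℤ) + 1))) ψ)
      (Res (Complex.I * Complex.log z) ψ) := by
  have hz0 : z ≠ 0 := by
    intro h; rw [h] at hz; simp at hz; linarith
  set f : ℕ → H := fun n => z ^ (-((n : ℤ) + 1)) • (U ^ (-((n : ℤ) + 1))) ψ with hf
  have hnorm : ∀ n, ‖f n‖ = (‖z‖⁻¹) ^ (n + 1) * ‖ψ‖ := by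
    intro n
    rw [hf, norm_smul, zpow_norm, norm_zpow]
    congr 1
    have h1 : (-((n : ℤ) + 1)) = -((n + 1 : ℕ) : ℤ) := by push_cast; ring
    rw [h1, zpow_neg, zpow_natCast, ← inv_pow]


  have hsum : Summable f := by
    apply Summable.of_norm
    simp only [hnorm]
    have hw : ‖z‖⁻¹ < 1 := by
      rw [inv_lt_one_iff₀]; right; exact hz
    have hw0 : 0 ≤ ‖z‖⁻¹ := by positivity
    exact (((summable_geometric_of_lt_one hw0 hw).mul_right _).comp_injective
      (add_left_injective 1))
  obtain ⟨S, hS⟩ := hsum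
  have hU : HasSum (fun n => z • U (f n)) (z • U S) :=
    ((U.toLinearIsometry.toContinuousLinearMap.hasSum hS).const_smul z)
  set g : ℕ → H := fun n => z ^ (-(n : ℤ)) • (U ^ (-(n : ℤ))) ψ with hg
  have hshift : ∀ n : ℕ, z • U (f n) = g n := by
    intro n
    have hUU : U ((U ^ (-((n : ℤ) + 1))) ψ) = (U ^ (-(n : ℤ))) ψ := by
      have : (-(n : ℤ)) = 1 + (-((n : ℤ) + 1)) := by omega
      rw [this, zpow_apply_add, zpow_one]
    simp only [hf, hg]
    rw [map_smul, smul_smul, hUU]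
    congr 1
    rw [mul_comm, ← zpow_add_one₀ hz0]
    congr 1
    omega
  have hUg : HasSum g (z • U S) := by simpa only [hshift] using hU
  have hgf : ∀ n : ℕ, g (n + 1) = f n := by
    intro n
    have hc : (-((n + 1 : ℕ) : ℤ)) = -((n : ℤ) + 1) := by push_cast; ring
    simp only [hf, hg, hc]
  have hU' : HasSum (fun n => g (n + 1)) (z • U S - g 0) := by
    have := (hasSum_nat_add_iff' (f := g) 1).mpr hUg
    simpa using this
  have hU'' : HasSum f (z • U S - g 0) := by simpa only [hgf] using hU'
  have hEq : S = z • U S - g 0 := hS.unique hU''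
  have hg0 : g 0 = ψ := by
    have h1 : (LinearIsometryEquiv.symm (1 : H ≃ₗᵢ[ℂ] H)) ψ = ψ := rfl
    simp [hg, h1]
  have : z • U S - S = ψ := by
    have h2 := eq_sub_iff_add_eq.mp hEq
    rw [← h2, hg0]
    abel
  rw [res_eq hRes hz0 (ne_of_gt hz) this]
  exact hS

lemma hasSum_inner_res_lt (hRes : RCond U Res) {z : ℂ} (hz0 : z ≠ 0)
    (hz : ‖z‖ < 1) (ψ x : H) :
    HasSum (fun n : ℕ => z ^ n * ⟪x, (U ^ (n : ℤ)) ψ⟫)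
      (-⟪x, Res (Complex.I * Complex.log z) ψ⟫) := by
  have h := (innerSL ℂ x).hasSum (hasSum_res_lt hRes hz0 hz ψ)
  simpa [inner_smul_right] using h

lemma hasSum_inner_res_gt (hRes : RCond U Res) {z : ℂ}
    (hz : 1 < ‖z‖) (ψ x : H) :
    HasSum (fun n : ℕ => z ^ (-((n : ℤ) + 1)) * ⟪x, (U ^ (-((n : ℤ) + 1))) ψ⟫)
      ⟪x, Res (Complex.I * Complex.log z) ψ⟫ := by
  have h := (innerSL ℂ x).hasSum (hasSum_res_gt hRes hz ψ)
  simpa [inner_smul_right] using h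

variable (Res) in
/-- The operator `A (R_U(μ_w) - R_U(μ_z)) A*` with `z = r e^{iθ}`, `w = r⁻¹ e^{iθ}`. -/
def Dop (A : H →L[ℂ] H) (r θ : ℝ) : H →L[ℂ] H :=
  A ∘L (Res (Complex.I * Complex.log ((r : ℂ)⁻¹ * Complex.exp (θ * Complex.I)))
        - Res (Complex.I * Complex.log ((r : ℂ) * Complex.exp (θ * Complex.I))))
    ∘L ContinuousLinearMap.adjoint A

lemma abs_r_exp (r θ : ℝ) (hr : 0 < r) :
    ‖(r : ℂ) * Complex.exp (θ * Complex.I)‖ = r := by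
  rw [norm_mul, Complex.norm_exp_ofReal_mul_I, Complex.norm_real, Real.norm_eq_abs, abs_of_pos hr, mul_one]

lemma Dop_norm_le {A : H →L[ℂ] H} {M : ℝ}
    (hbound : ∀ μ : ℂ, μ.im ≠ 0 →
      ‖A ∘L Res μ ∘L ContinuousLinearMap.adjoint A‖ ≤ M)
    {r : ℝ} (hr0 : 0 < r) (hr1 : r < 1) (θ : ℝ) :
    ‖Dop Res A r θ‖ ≤ 2 * M := by
  have hrinv : (1:ℝ) < r⁻¹ := (one_lt_inv_iff₀).mpr ⟨hr0, hr1⟩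
  have h1 : ‖(r : ℂ)⁻¹ * Complex.exp (θ * Complex.I)‖ = r⁻¹ := by
    have := abs_r_exp r⁻¹ θ (by positivity)
    simpa using this
  have h2 := abs_r_exp r θ hr0
  have him1 : (Complex.I * Complex.log ((r : ℂ)⁻¹ * Complex.exp (θ * Complex.I))).im ≠ 0 := by
    apply im_mu_ne
    · intro h; rw [h] at h1; simp at h1; linarith
    · rw [h1]; exact ne_of_gt hrinv
  have him2 : (Complex.I * Complex.log ((r : ℂ) * Complex.exp (θ * Complex.I))).im ≠ 0 := by
    apply im_mu_ne
    · intro h; rw [h] at h2; simp at h2; linarith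
    · rw [h2]; exact ne_of_lt hr1
  have hsplit : Dop Res A r θ =
      (A ∘L Res (Complex.I * Complex.log ((r : ℂ)⁻¹ * Complex.exp (θ * Complex.I)))
        ∘L ContinuousLinearMap.adjoint A)
      - (A ∘L Res (Complex.I * Complex.log ((r : ℂ) * Complex.exp (θ * Complex.I)))
        ∘L ContinuousLinearMap.adjoint A) := by
    rw [Dop, ContinuousLinearMap.sub_comp, ContinuousLinearMap.comp_sub]
  rw [hsplit]
  calc ‖_ - _‖ ≤ _ + _ := norm_sub_le _ _
    _ ≤ M + M := add_le_add (hbound _ him1) (hbound _ him2)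
    _ = 2 * M := by ring

lemma hasSum_inner_Dop (hRes : RCond U Res) {A : H →L[ℂ] H} {r : ℝ}
    (hr0 : 0 < r) (hr1 : r < 1) (θ : ℝ) (x y : H) :
    HasSum (fun n : ℕ =>
      (r : ℂ) ^ (n + 1) * Complex.exp (-((n : ℂ) + 1) * θ * Complex.I) *
        ⟪ContinuousLinearMap.adjoint A x, (U ^ (-((n : ℤ) + 1))) (ContinuousLinearMap.adjoint A y)⟫
      + (r : ℂ) ^ n * Complex.exp ((n : ℂ) * θ * Complex.I) *
        ⟪ContinuousLinearMap.adjoint A x, (U ^ (n : ℤ)) (ContinuousLinearMap.adjoint A y)⟫)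
      ⟪x, Dop Res A r θ y⟫ := by
  set χ := ContinuousLinearMap.adjoint A x with hχ
  set ψ := ContinuousLinearMap.adjoint A y with hψ
  have habs_lt : ‖(r : ℂ) * Complex.exp (θ * Complex.I)‖ < 1 := by
    rw [abs_r_exp r θ hr0]; exact hr1
  have hz0 : ((r : ℂ) * Complex.exp (θ * Complex.I)) ≠ 0 := by
    intro h
    have := abs_r_exp r θ hr0
    rw [h] at this; simp at this; linarith
  have habs_gt : 1 < ‖(r : ℂ)⁻¹ * Complex.exp (θ * Complex.I)‖ := by
    have := abs_r_exp r⁻¹ θ (by positivity)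
    push_cast at this
    rw [this]
    exact (one_lt_inv_iff₀).mpr ⟨hr0, hr1⟩
  have h1 := hasSum_inner_res_lt hRes hz0 habs_lt ψ χ
  have h2 := hasSum_inner_res_gt hRes habs_gt ψ χ
  have e1 : ∀ n : ℕ, ((r : ℂ) * Complex.exp (θ * Complex.I)) ^ n
      = (r : ℂ) ^ n * Complex.exp ((n : ℂ) * θ * Complex.I) := by
    intro n
    rw [mul_pow, ← Complex.exp_nat_mul]
    ring_nf
  have e2 : ∀ n : ℕ, ((r : ℂ)⁻¹ * Complex.exp (θ * Complex.I)) ^ (-((n : ℤ) + 1))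
      = (r : ℂ) ^ (n + 1) * Complex.exp (-((n : ℂ) + 1) * θ * Complex.I) := by
    intro n
    rw [mul_zpow, inv_zpow', neg_neg]
    have c1 : ((n : ℤ) + 1) = ((n + 1 : ℕ) : ℤ) := by push_cast; ring
    rw [c1, zpow_natCast, zpow_neg, zpow_natCast, ← Complex.exp_nat_mul, ← Complex.exp_neg]
    congr 1
    push_cast
    ring
  simp only [e1, e2] at h1 h2
  have hD : ⟪x, Dop Res A r θ y⟫ =
      ⟪χ, Res (Complex.I * Complex.log ((r : ℂ)⁻¹ * Complex.exp (θ * Complex.I))) ψ⟫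
      + -⟪χ, Res (Complex.I * Complex.log ((r : ℂ) * Complex.exp (θ * Complex.I))) ψ⟫ := by
    rw [Dop, ContinuousLinearMap.comp_apply, ContinuousLinearMap.comp_apply,
      ← ContinuousLinearMap.adjoint_inner_left, ← hχ, ← hψ,
      ContinuousLinearMap.sub_apply, inner_sub_right, sub_eq_add_neg]
  rw [hD]
  exact h2.add h1

lemma norm_term_le {A : H →L[ℂ] H} {r : ℝ} (hr0 : 0 < r) (hr1 : r < 1)
    (x y : H) (n : ℕ) (θ : ℝ) :
    ‖(r : ℂ) ^ (n + 1) * Complex.exp (-((n : ℂ) + 1) * θ * Complex.I) *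
        ⟪ContinuousLinearMap.adjoint A x, (U ^ (-((n : ℤ) + 1))) (ContinuousLinearMap.adjoint A y)⟫
      + (r : ℂ) ^ n * Complex.exp ((n : ℂ) * θ * Complex.I) *
        ⟪ContinuousLinearMap.adjoint A x, (U ^ (n : ℤ)) (ContinuousLinearMap.adjoint A y)⟫‖
      ≤ 2 * (‖ContinuousLinearMap.adjoint A x‖ * ‖ContinuousLinearMap.adjoint A y‖) * r ^ n := by
  have hK : ∀ m : ℤ, ‖⟪ContinuousLinearMap.adjoint A x, (U ^ m) (ContinuousLinearMap.adjoint A y)⟫‖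
      ≤ ‖ContinuousLinearMap.adjoint A x‖ * ‖ContinuousLinearMap.adjoint A y‖ := by
    intro m
    refine (norm_inner_le_norm _ _).trans ?_
    rw [zpow_norm]
  have he1 : ‖Complex.exp (-((n : ℂ) + 1) * θ * Complex.I)‖ = 1 := by
    have : (-((n : ℂ) + 1) * θ * Complex.I) = (((-(n + 1 : ℝ) * θ : ℝ)) : ℂ) * Complex.I := by
      push_cast; ring
    rw [this, Complex.norm_exp_ofReal_mul_I]
  have he2 : ‖Complex.exp ((n : ℂ) * θ * Complex.I)‖ = 1 := by
    have : ((n : ℂ) * θ * Complex.I) = ((((n : ℝ) * θ : ℝ)) : ℂ) * Complex.I := by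
      push_cast; ring
    rw [this, Complex.norm_exp_ofReal_mul_I]
  have hrn : ‖(r : ℂ) ^ (n + 1)‖ = r ^ (n + 1) := by
    rw [norm_pow, Complex.norm_real, Real.norm_eq_abs, abs_of_pos hr0]
  have hrn' : ‖(r : ℂ) ^ n‖ = r ^ n := by
    rw [norm_pow, Complex.norm_real, Real.norm_eq_abs, abs_of_pos hr0]
  calc ‖_ + _‖ ≤ ‖_‖ + ‖_‖ := norm_add_le _ _
    _ ≤ r ^ (n + 1) * 1 * (‖ContinuousLinearMap.adjoint A x‖ * ‖ContinuousLinearMap.adjoint A y‖)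
        + r ^ n * 1 * (‖ContinuousLinearMap.adjoint A x‖ * ‖ContinuousLinearMap.adjoint A y‖) := by
      rw [norm_mul, norm_mul, norm_mul, norm_mul, hrn, hrn', he1, he2]
      gcongr <;> exact hK _
    _ ≤ r ^ n * (‖ContinuousLinearMap.adjoint A x‖ * ‖ContinuousLinearMap.adjoint A y‖)
        + r ^ n * (‖ContinuousLinearMap.adjoint A x‖ * ‖ContinuousLinearMap.adjoint A y‖) := by
      rw [mul_one, mul_one]
      have hpow : r ^ (n + 1) ≤ r ^ n := pow_le_pow_of_le_one hr0.le hr1.le (by omega)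
      have hK0 : (0:ℝ) ≤ ‖ContinuousLinearMap.adjoint A x‖ * ‖ContinuousLinearMap.adjoint A y‖ := by
        positivity
      exact add_le_add (mul_le_mul_of_nonneg_right hpow hK0) le_rfl
    _ = 2 * (‖ContinuousLinearMap.adjoint A x‖ * ‖ContinuousLinearMap.adjoint A y‖) * r ^ n := by
      ring

lemma continuous_inner_Dop (hRes : RCond U Res) {A : H →L[ℂ] H} {r : ℝ}
    (hr0 : 0 < r) (hr1 : r < 1) (x y : H) :
    Continuous (fun θ : ℝ => ⟪x, Dop Res A r θ y⟫) := by
  have hrep : (fun θ : ℝ => ⟪x, Dop Res A r θ y⟫) = fun θ : ℝ => ∑' n : ℕ,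
      ((r : ℂ) ^ (n + 1) * Complex.exp (-((n : ℂ) + 1) * θ * Complex.I) *
        ⟪ContinuousLinearMap.adjoint A x, (U ^ (-((n : ℤ) + 1))) (ContinuousLinearMap.adjoint A y)⟫
      + (r : ℂ) ^ n * Complex.exp ((n : ℂ) * θ * Complex.I) *
        ⟪ContinuousLinearMap.adjoint A x, (U ^ (n : ℤ)) (ContinuousLinearMap.adjoint A y)⟫) :=
    funext fun θ => ((hasSum_inner_Dop hRes hr0 hr1 θ x y).tsum_eq).symm
  rw [hrep]
  apply continuous_tsum
    (u := fun n => 2 * (‖ContinuousLinearMap.adjoint A x‖ * ‖ContinuousLinearMap.adjoint A y‖) * r ^ n)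
  · intro n; fun_prop
  · exact (summable_geometric_of_lt_one hr0.le hr1).mul_left _
  · intro n θ
    exact norm_term_le hr0 hr1 x y n θ

open Real intervalIntegral in
lemma integral_exp_int (k : ℤ) :
    (∫ θ in (0:ℝ)..(2 * π), Complex.exp ((k : ℂ) * θ * Complex.I))
      = if k = 0 then ((2 * π : ℝ) : ℂ) else 0 := by
  rcases eq_or_ne k 0 with h | h
  · simp [h]
  · have hc : (k : ℂ) * Complex.I ≠ 0 := by
      simp [Complex.I_ne_zero, h]
    have heq : ∀ θ : ℝ, (k : ℂ) * θ * Complex.I = ((k : ℂ) * Complex.I) * θ := by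
      intro θ; ring
    simp only [heq]
    rw [integral_exp_mul_complex hc, if_neg h]
    push_cast
    have h1 : (k : ℂ) * Complex.I * (2 * (π : ℂ)) = (k : ℂ) * (2 * (π : ℂ) * Complex.I) := by
      ring
    rw [h1, Complex.exp_int_mul_two_pi_mul_I]
    simp

open Real intervalIntegral in
lemma integral_tsum_geom {f : ℕ → ℝ → ℂ} (hcont : ∀ n, Continuous (f n))
    {b : ℕ → ℝ} (hb : Summable b) (hfb : ∀ n θ, ‖f n θ‖ ≤ b n) :
    (∫ θ in (0:ℝ)..(2 * π), ∑' n, f n θ) = ∑' n, ∫ θ in (0:ℝ)..(2 * π), f n θ := by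
  have hsum : ∀ θ, Summable fun n => f n θ := fun θ =>
    Summable.of_norm (hb.of_nonneg_of_le (fun n => norm_nonneg _) fun n => hfb n θ)
  refine (hasSum_integral_of_dominated_convergence (fun n _ => b n) ?_ ?_ ?_ ?_ ?_).tsum_eq.symm
  · exact fun n => (hcont n).aestronglyMeasurable
  · exact fun n => Filter.Eventually.of_forall fun θ _ => hfb n θ
  · exact Filter.Eventually.of_forall fun θ _ => hb
  · exact intervalIntegrable_const
  · exact Filter.Eventually.of_forall fun θ _ => (hsum θ).hasSum

open Real intervalIntegral in
lemma integral_pair (hRes : RCond U Res) {A : H →L[ℂ] H} {r : ℝ}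
    (hr0 : 0 < r) (hr1 : r < 1) (m : ℤ) (x y : H) :
    (∫ θ in (0:ℝ)..(2 * π), Complex.exp ((m : ℂ) * θ * Complex.I) * ⟪x, Dop Res A r θ y⟫)
      = ((2 * π : ℝ) : ℂ) * (r : ℂ) ^ m.natAbs *
        ⟪ContinuousLinearMap.adjoint A x, (U ^ (-m)) (ContinuousLinearMap.adjoint A y)⟫ := by
  set χ := ContinuousLinearMap.adjoint A x with hχ
  set ψ := ContinuousLinearMap.adjoint A y with hψ
  set F : ℕ → ℝ → ℂ := fun n θ => Complex.exp ((m : ℂ) * θ * Complex.I) *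
      ((r : ℂ) ^ (n + 1) * Complex.exp (-((n : ℂ) + 1) * θ * Complex.I) *
        ⟪χ, (U ^ (-((n : ℤ) + 1))) ψ⟫
      + (r : ℂ) ^ n * Complex.exp ((n : ℂ) * θ * Complex.I) * ⟪χ, (U ^ (n : ℤ)) ψ⟫) with hF
  have hexpm : ∀ θ : ℝ, ‖Complex.exp ((m : ℂ) * θ * Complex.I)‖ = 1 := by
    intro θ
    have : ((m : ℂ) * θ * Complex.I) = ((((m : ℝ) * θ : ℝ)) : ℂ) * Complex.I := by
      push_cast; ring
    rw [this, Complex.norm_exp_ofReal_mul_I]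
  have hrepr : ∀ θ : ℝ, Complex.exp ((m : ℂ) * θ * Complex.I) * ⟪x, Dop Res A r θ y⟫
      = ∑' n, F n θ := by
    intro θ
    exact ((hasSum_inner_Dop hRes hr0 hr1 θ x y).mul_left
      (Complex.exp ((m : ℂ) * θ * Complex.I))).tsum_eq.symm
  have hswap : (∫ θ in (0:ℝ)..(2 * π), ∑' n, F n θ) = ∑' n, ∫ θ in (0:ℝ)..(2 * π), F n θ := by
    apply integral_tsum_geom
    · intro n; rw [hF]; fun_prop
    · exact (summable_geometric_of_lt_one hr0.le hr1).mul_left (2 * (‖χ‖ * ‖ψ‖))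
    · intro n θ
      rw [hF]
      simp only []
      rw [norm_mul, hexpm, one_mul]
      exact norm_term_le hr0 hr1 x y n θ
  have hC : ∀ n : ℕ, (∫ θ in (0:ℝ)..(2 * π), F n θ)
      = (if (m - ((n : ℤ) + 1)) = 0 then ((2 * π : ℝ) : ℂ) else 0) *
          ((r : ℂ) ^ (n + 1) * ⟪χ, (U ^ (-((n : ℤ) + 1))) ψ⟫)
        + (if (m + (n : ℤ)) = 0 then ((2 * π : ℝ) : ℂ) else 0) *
          ((r : ℂ) ^ n * ⟪χ, (U ^ (n : ℤ)) ψ⟫) := by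
    intro n
    have hfeq : ∀ θ : ℝ, F n θ =
        ((r : ℂ) ^ (n + 1) * ⟪χ, (U ^ (-((n : ℤ) + 1))) ψ⟫) *
          Complex.exp (((m - ((n : ℤ) + 1) : ℤ) : ℂ) * θ * Complex.I)
        + ((r : ℂ) ^ n * ⟪χ, (U ^ (n : ℤ)) ψ⟫) *
          Complex.exp (((m + (n : ℤ) : ℤ) : ℂ) * θ * Complex.I) := by
      intro θ
      have hm1 : Complex.exp (-((n : ℂ) + 1) * θ * Complex.I) *
          Complex.exp ((m : ℂ) * θ * Complex.I)
          = Complex.exp (((m - ((n : ℤ) + 1) : ℤ) : ℂ) * θ * Complex.I) := by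
        rw [← Complex.exp_add]; congr 1; push_cast; ring
      have hm2 : Complex.exp ((n : ℂ) * θ * Complex.I) *
          Complex.exp ((m : ℂ) * θ * Complex.I)
          = Complex.exp (((m + (n : ℤ) : ℤ) : ℂ) * θ * Complex.I) := by
        rw [← Complex.exp_add]; congr 1; push_cast; ring
      rw [hF]
      simp only []
      rw [← hm1, ← hm2]
      ring
    calc (∫ θ in (0:ℝ)..(2 * π), F n θ)
        = ∫ θ in (0:ℝ)..(2 * π),
            (((r : ℂ) ^ (n + 1) * ⟪χ, (U ^ (-((n : ℤ) + 1))) ψ⟫) *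
              Complex.exp (((m - ((n : ℤ) + 1) : ℤ) : ℂ) * θ * Complex.I)
            + ((r : ℂ) ^ n * ⟪χ, (U ^ (n : ℤ)) ψ⟫) *
              Complex.exp (((m + (n : ℤ) : ℤ) : ℂ) * θ * Complex.I)) :=
          integral_congr (fun θ _ => hfeq θ)
      _ = _ := by
          rw [integral_add (by apply Continuous.intervalIntegrable; fun_prop)
              (by apply Continuous.intervalIntegrable; fun_prop),
            integral_const_mul, integral_const_mul, integral_exp_int, integral_exp_int]
          ring
  have hstep : (∫ θ in (0:ℝ)..(2 * π),
        Complex.exp ((m : ℂ) * θ * Complex.I) * ⟪x, Dop Res A r θ y⟫)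
      = ∑' n, ∫ θ in (0:ℝ)..(2 * π), F n θ := by
    rw [← hswap]
    exact integral_congr fun θ _ => hrepr θ
  rw [hstep]
  rcases le_or_gt m 0 with hm | hm
  · set n₀ := (-m).toNat with hn₀
    have hmn : ((n₀ : ℤ)) = -m := by omega
    have hna : m.natAbs = n₀ := by omega
    have hfun : (fun n : ℕ => ∫ θ in (0:ℝ)..(2 * π), F n θ)
        = fun n : ℕ => (if n = n₀ then
            ((2 * π : ℝ) : ℂ) * (r : ℂ) ^ m.natAbs * ⟪χ, (U ^ (-m)) ψ⟫ else 0) := by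
      funext n
      rw [hC n]
      by_cases hn : n = n₀
      · subst hn
        rw [if_pos rfl, if_neg (by omega), if_pos (by omega), zero_mul, zero_add]
        rw [hmn, hna]
        ring
      · rw [if_neg hn, if_neg (by omega), if_neg (by omega)]
        simp
    rw [hfun, tsum_ite_eq]
  · set n₀ := (m - 1).toNat with hn₀
    have hmn : -((n₀ : ℤ) + 1) = -m := by omega
    have hna : m.natAbs = n₀ + 1 := by omega
    have hfun : (fun n : ℕ => ∫ θ in (0:ℝ)..(2 * π), F n θ)
        = fun n : ℕ => (if n = n₀ then
            ((2 * π : ℝ) : ℂ) * (r : ℂ) ^ m.natAbs * ⟪χ, (U ^ (-m)) ψ⟫ else 0) := by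
      funext n
      rw [hC n]
      by_cases hn : n = n₀
      · subst hn
        rw [if_pos rfl, if_pos (by omega), if_neg (by omega), zero_mul, add_zero]
        rw [hmn, hna]
        ring
      · rw [if_neg hn, if_neg (by omega), if_neg (by omega)]
        simp
    rw [hfun, tsum_ite_eq]

lemma exp_conj_int (s : ℤ) (θ : ℝ) :
    (starRingEnd ℂ) (Complex.exp ((s : ℂ) * θ * Complex.I))
      = Complex.exp (-(s : ℂ) * θ * Complex.I) := by
  rw [← Complex.exp_conj]
  congr 1
  simp [map_mul, Complex.conj_I, Complex.conj_ofReal]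

lemma exp_merge (a b : ℤ) (θ : ℝ) :
    Complex.exp (-(a : ℂ) * θ * Complex.I) * Complex.exp ((b : ℂ) * θ * Complex.I)
      = Complex.exp (((b - a : ℤ) : ℂ) * θ * Complex.I) := by
  rw [← Complex.exp_add]; congr 1; push_cast; ring

lemma inner_G_apply (B : H →L[ℂ] H) (T : Finset ℤ) (g : ℤ → H) (θ : ℝ) :
    ⟪∑ s ∈ T, Complex.exp ((s : ℂ) * θ * Complex.I) • g s,
      B (∑ t ∈ T, Complex.exp ((t : ℂ) * θ * Complex.I) • g t)⟫
    = ∑ s ∈ T, ∑ t ∈ T,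
        Complex.exp (((t - s : ℤ) : ℂ) * θ * Complex.I) * ⟪g s, B (g t)⟫ := by
  rw [map_sum, sum_inner]
  apply Finset.sum_congr rfl
  intro s _
  rw [inner_smul_left, inner_sum, Finset.mul_sum]
  apply Finset.sum_congr rfl
  intro t _
  rw [map_smul, inner_smul_right, exp_conj_int, ← mul_assoc, exp_merge]

open Real intervalIntegral in
lemma key_bound (hRes : RCond U Res) {A : H →L[ℂ] H} {M : ℝ} (hM : 0 ≤ M)
    (hbound : ∀ μ : ℂ, μ.im ≠ 0 →
      ‖A ∘L Res μ ∘L ContinuousLinearMap.adjoint A‖ ≤ M)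
    (T : Finset ℤ) (g : ℤ → H) :
    ‖∑ s ∈ T, ∑ t ∈ T, ⟪ContinuousLinearMap.adjoint A (g s),
        (U ^ (s - t)) (ContinuousLinearMap.adjoint A (g t))⟫‖
      ≤ 2 * M * ∑ t ∈ T, ‖g t‖ ^ 2 := by
  set G : ℝ → H := fun θ => ∑ t ∈ T, Complex.exp ((t : ℂ) * θ * Complex.I) • g t with hG
  have hGcont : Continuous G := by
    rw [hG]; fun_prop
  set Q : ℝ → ℂ := fun r => ∑ s ∈ T, ∑ t ∈ T, ((r : ℂ) ^ (t - s).natAbs) *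
      ⟪ContinuousLinearMap.adjoint A (g s),
        (U ^ (s - t)) (ContinuousLinearMap.adjoint A (g t))⟫ with hQ
  have hQcont : Continuous Q := by
    rw [hQ]; fun_prop
  have hQ1 : Q 1 = ∑ s ∈ T, ∑ t ∈ T, ⟪ContinuousLinearMap.adjoint A (g s),
      (U ^ (s - t)) (ContinuousLinearMap.adjoint A (g t))⟫ := by
    rw [hQ]; push_cast; simp
  have hsumnn : (0:ℝ) ≤ ∑ t ∈ T, ‖g t‖ ^ 2 := Finset.sum_nonneg fun t _ => sq_nonneg _
  -- the squared-norm integral of G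
  have hGsq : (∫ θ in (0:ℝ)..(2 * π), ‖G θ‖ ^ 2) = 2 * π * ∑ t ∈ T, ‖g t‖ ^ 2 := by
    have hid : ∀ θ : ℝ, ⟪G θ, G θ⟫ = ∑ s ∈ T, ∑ t ∈ T,
        Complex.exp (((t - s : ℤ) : ℂ) * θ * Complex.I) * ⟪g s, g t⟫ := by
      intro θ
      have := inner_G_apply (ContinuousLinearMap.id ℂ H) T g θ
      simpa using this
    have heach : ∀ s t : ℤ, (∫ θ in (0:ℝ)..(2 * π),
        Complex.exp (((t - s : ℤ) : ℂ) * θ * Complex.I) * ⟪g s, g t⟫)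
        = (if (t - s : ℤ) = 0 then ((2 * π : ℝ) : ℂ) else 0) * ⟪g s, g t⟫ := by
      intro s t
      rw [integral_mul_const, integral_exp_int]
    have hdiag : ∀ s ∈ T, (∑ t ∈ T, ∫ θ in (0:ℝ)..(2 * π),
        Complex.exp (((t - s : ℤ) : ℂ) * θ * Complex.I) * ⟪g s, g t⟫)
        = ((2 * π : ℝ) : ℂ) * ⟪g s, g s⟫ := by
      intro s hs
      calc (∑ t ∈ T, ∫ θ in (0:ℝ)..(2 * π),
            Complex.exp (((t - s : ℤ) : ℂ) * θ * Complex.I) * ⟪g s, g t⟫)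
          = ∑ t ∈ T, (if t = s then ((2 * π : ℝ) : ℂ) * ⟪g s, g t⟫ else 0) := by
            apply Finset.sum_congr rfl
            intro t _
            rw [heach s t]
            by_cases h : t = s
            · rw [if_pos (by omega), if_pos h]
            · rw [if_neg (by omega), if_neg h, zero_mul]
        _ = ((2 * π : ℝ) : ℂ) * ⟪g s, g s⟫ := by
            rw [Finset.sum_ite_eq' T s, if_pos hs]
    have hc : (∫ θ in (0:ℝ)..(2 * π), ⟪G θ, G θ⟫)
        = ((2 * π * ∑ t ∈ T, ‖g t‖ ^ 2 : ℝ) : ℂ) := by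
      rw [show (fun θ : ℝ => ⟪G θ, G θ⟫) = fun θ : ℝ => ∑ s ∈ T, ∑ t ∈ T,
          Complex.exp (((t - s : ℤ) : ℂ) * θ * Complex.I) * ⟪g s, g t⟫
        from funext hid]
      have hint1 : ∀ s ∈ T, IntervalIntegrable (fun θ : ℝ => ∑ t ∈ T,
          Complex.exp (((t - s : ℤ) : ℂ) * θ * Complex.I) * ⟪g s, g t⟫)
          MeasureTheory.volume 0 (2 * π) := by
        intro s _
        apply Continuous.intervalIntegrable
        apply continuous_finset_sum
        intro t _
        fun_prop
      rw [integral_finset_sum hint1]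
      rw [Finset.sum_congr rfl (fun s hs => by
        rw [integral_finset_sum (f := fun t (θ : ℝ) =>
            Complex.exp (((t - s : ℤ) : ℂ) * θ * Complex.I) * ⟪g s, g t⟫)
          (fun t _ => (by fun_prop : Continuous fun θ : ℝ =>
          Complex.exp (((t - s : ℤ) : ℂ) * θ * Complex.I) * ⟪g s, g t⟫).intervalIntegrable _ _),
          hdiag s hs])]
      simp only [inner_self_eq_norm_sq_to_K]
      push_cast
      rw [Finset.mul_sum]
      exact Finset.sum_congr rfl fun i _ => by norm_num
    have hre : (∫ θ in (0:ℝ)..(2 * π), ⟪G θ, G θ⟫)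
        = ((∫ θ in (0:ℝ)..(2 * π), ‖G θ‖ ^ 2 : ℝ) : ℂ) := by
      rw [show (fun θ : ℝ => ⟪G θ, G θ⟫) = fun θ : ℝ => ((‖G θ‖ ^ 2 : ℝ) : ℂ)
        from funext fun θ => by
          rw [inner_self_eq_norm_sq_to_K (𝕜 := ℂ) (G θ)]; norm_cast]
      exact integral_ofReal
    have hfin := hre.symm.trans hc
    exact_mod_cast hfin
  -- the main estimate for r ∈ (0,1)
  have hmain : ∀ r : ℝ, r ∈ Set.Ioo (0:ℝ) 1 → ‖Q r‖ ≤ 2 * M * ∑ t ∈ T, ‖g t‖ ^ 2 := by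
    rintro r ⟨hr0, hr1⟩
    have hpair : ∀ s ∈ T, ∀ t ∈ T,
        (∫ θ in (0:ℝ)..(2 * π),
          Complex.exp (((t - s : ℤ) : ℂ) * θ * Complex.I) * ⟪g s, Dop Res A r θ (g t)⟫)
        = ((2 * π : ℝ) : ℂ) * ((r : ℂ) ^ (t - s).natAbs *
            ⟪ContinuousLinearMap.adjoint A (g s),
              (U ^ (s - t)) (ContinuousLinearMap.adjoint A (g t))⟫) := by
      intro s _ t _
      have h := integral_pair (A := A) hRes hr0 hr1 (t - s) (g s) (g t)
      rw [neg_sub] at h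
      rw [h]; ring
    have hintegrand : ∀ s t : ℤ, IntervalIntegrable
        (fun θ : ℝ => Complex.exp (((t - s : ℤ) : ℂ) * θ * Complex.I) *
          ⟪g s, Dop Res A r θ (g t)⟫) MeasureTheory.volume 0 (2 * π) := by
      intro s t
      apply Continuous.intervalIntegrable
      exact (by fun_prop : Continuous fun θ : ℝ =>
          Complex.exp (((t - s : ℤ) : ℂ) * θ * Complex.I)).mul
        (continuous_inner_Dop hRes hr0 hr1 (g s) (g t))
    have hexpand : (fun θ : ℝ => ⟪G θ, Dop Res A r θ (G θ)⟫) = fun θ : ℝ =>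
        ∑ s ∈ T, ∑ t ∈ T, Complex.exp (((t - s : ℤ) : ℂ) * θ * Complex.I) *
          ⟪g s, Dop Res A r θ (g t)⟫ :=
      funext fun θ => inner_G_apply _ T g θ
    have hIdent : (∫ θ in (0:ℝ)..(2 * π), ⟪G θ, Dop Res A r θ (G θ)⟫)
        = ((2 * π : ℝ) : ℂ) * Q r := by
      rw [hexpand]
      have hint2 : ∀ s ∈ T, IntervalIntegrable (fun θ : ℝ => ∑ t ∈ T,
          Complex.exp (((t - s : ℤ) : ℂ) * θ * Complex.I) * ⟪g s, Dop Res A r θ (g t)⟫)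
          MeasureTheory.volume 0 (2 * π) := by
        intro s _
        apply Continuous.intervalIntegrable
        apply continuous_finset_sum
        intro t _
        exact (by fun_prop : Continuous fun θ : ℝ =>
            Complex.exp (((t - s : ℤ) : ℂ) * θ * Complex.I)).mul
          (continuous_inner_Dop hRes hr0 hr1 (g s) (g t))
      have hstep : ∀ s ∈ T, (∫ θ in (0:ℝ)..(2 * π), ∑ t ∈ T,
          Complex.exp (((t - s : ℤ) : ℂ) * θ * Complex.I) * ⟪g s, Dop Res A r θ (g t)⟫)
          = ∑ t ∈ T, ((2 * π : ℝ) : ℂ) * ((r : ℂ) ^ (t - s).natAbs *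
              ⟪ContinuousLinearMap.adjoint A (g s),
                (U ^ (s - t)) (ContinuousLinearMap.adjoint A (g t))⟫) := by
        intro s hs
        rw [integral_finset_sum (f := fun t (θ : ℝ) =>
            Complex.exp (((t - s : ℤ) : ℂ) * θ * Complex.I) * ⟪g s, Dop Res A r θ (g t)⟫)
          (fun t _ => hintegrand s t)]
        exact Finset.sum_congr rfl (fun t ht => hpair s hs t ht)
      rw [integral_finset_sum hint2]
      rw [Finset.sum_congr rfl hstep, hQ]
      simp only [Finset.mul_sum]
    have hGDcont : Continuous fun θ : ℝ => ⟪G θ, Dop Res A r θ (G θ)⟫ := by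
      rw [hexpand]
      apply continuous_finset_sum
      intro s _
      apply continuous_finset_sum
      intro t _
      exact (by fun_prop : Continuous fun θ : ℝ =>
          Complex.exp (((t - s : ℤ) : ℂ) * θ * Complex.I)).mul
        (continuous_inner_Dop hRes hr0 hr1 (g s) (g t))
    have hb : ∀ θ : ℝ, ‖⟪G θ, Dop Res A r θ (G θ)⟫‖ ≤ 2 * M * ‖G θ‖ ^ 2 := by
      intro θ
      calc ‖⟪G θ, Dop Res A r θ (G θ)⟫‖ ≤ ‖G θ‖ * ‖Dop Res A r θ (G θ)‖ :=
            norm_inner_le_norm _ _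
        _ ≤ ‖G θ‖ * (‖Dop Res A r θ‖ * ‖G θ‖) := by
            gcongr
            exact (Dop Res A r θ).le_opNorm _
        _ ≤ ‖G θ‖ * ((2 * M) * ‖G θ‖) := by
            gcongr
            exact Dop_norm_le hbound hr0 hr1 θ
        _ = 2 * M * ‖G θ‖ ^ 2 := by ring
    have hnormle : ‖∫ θ in (0:ℝ)..(2 * π), ⟪G θ, Dop Res A r θ (G θ)⟫‖
        ≤ |∫ θ in (0:ℝ)..(2 * π), 2 * M * ‖G θ‖ ^ 2| := by
      refine (norm_integral_le_of_norm_le (by positivity) ?_ ?_).trans (le_abs_self _)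
      · filter_upwards with θ _ using hb θ
      · exact ((by fun_prop : Continuous fun θ : ℝ =>
          2 * M * ‖G θ‖ ^ 2)).intervalIntegrable _ _
    have hInt2 : (∫ θ in (0:ℝ)..(2 * π), 2 * M * ‖G θ‖ ^ 2)
        = 2 * M * (2 * π * ∑ t ∈ T, ‖g t‖ ^ 2) := by
      rw [integral_const_mul, hGsq]
    have hnn : (0:ℝ) ≤ 2 * M * (2 * π * ∑ t ∈ T, ‖g t‖ ^ 2) :=
      mul_nonneg (by linarith) (mul_nonneg (by positivity) hsumnn)
    rw [hInt2, _root_.abs_of_nonneg hnn] at hnormle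
    rw [hIdent] at hnormle
    have h2π : (0:ℝ) < 2 * π := by positivity
    have hnr : ‖((2 * π : ℝ) : ℂ)‖ = 2 * π := by
      rw [Complex.norm_real, Real.norm_eq_abs, abs_of_pos h2π]
    have hQr : 2 * π * ‖Q r‖ ≤ 2 * π * (2 * M * ∑ t ∈ T, ‖g t‖ ^ 2) := by
      calc 2 * π * ‖Q r‖ = ‖((2 * π : ℝ) : ℂ)‖ * ‖Q r‖ := by rw [hnr]
        _ = ‖((2 * π : ℝ) : ℂ) * Q r‖ := (norm_mul _ _).symm
        _ ≤ 2 * M * (2 * π * ∑ t ∈ T, ‖g t‖ ^ 2) := hnormle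
        _ = 2 * π * (2 * M * ∑ t ∈ T, ‖g t‖ ^ 2) := by ring
    exact le_of_mul_le_mul_left hQr h2π
  -- pass to the limit r → 1⁻
  have hmem : Set.Ioo (0:ℝ) 1 ∈ nhdsWithin (1:ℝ) (Set.Iio 1) :=
    Ioo_mem_nhdsLT zero_lt_one
  have htend : Filter.Tendsto (fun r => ‖Q r‖) (nhdsWithin (1:ℝ) (Set.Iio 1))
      (nhds ‖Q 1‖) :=
    ((hQcont.tendsto 1).mono_left nhdsWithin_le_nhds).norm
  have hlim : ‖Q 1‖ ≤ 2 * M * ∑ t ∈ T, ‖g t‖ ^ 2 :=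
    le_of_tendsto htend (Filter.eventually_of_mem hmem hmain)
  rw [← hQ1]
  exact hlim

lemma zpow_zero_apply (U : H ≃ₗᵢ[ℂ] H) (x : H) : (U ^ (0:ℤ)) x = x := by
  rw [zpow_zero]; rfl

lemma inner_zpow_left (U : H ≃ₗᵢ[ℂ] H) (a : ℤ) (x y : H) :
    ⟪(U ^ a) x, y⟫ = ⟪x, (U ^ (-a)) y⟫ := by
  have h := inner_zpow U a 0 x y
  rw [zpow_zero_apply] at h
  have e : (0:ℤ) - a = -a := by omega
  rw [e] at h
  exact h

lemma finset_bound (hRes : RCond U Res) {A : H →L[ℂ] H} {M : ℝ} (hM : 0 ≤ M)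
    (hbound : ∀ μ : ℂ, μ.im ≠ 0 →
      ‖A ∘L Res μ ∘L ContinuousLinearMap.adjoint A‖ ≤ M)
    (T : Finset ℤ) (φ : H) :
    ∑ t ∈ T, ‖A ((U ^ t) φ)‖ ^ 2 ≤ 2 * M * ‖φ‖ ^ 2 := by
  set g : ℤ → H := fun t => A ((U ^ t) φ) with hg
  set S : ℝ := ∑ t ∈ T, ‖g t‖ ^ 2 with hS
  set h : H := ∑ t ∈ T, (U ^ (-t)) (ContinuousLinearMap.adjoint A (g t)) with hh
  have hS0 : 0 ≤ S := Finset.sum_nonneg fun t _ => sq_nonneg _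
  have hip : ⟪h, φ⟫ = (S : ℂ) := by
    rw [hh, sum_inner]
    have he : ∀ t ∈ T, ⟪(U ^ (-t)) (ContinuousLinearMap.adjoint A (g t)), φ⟫
        = ((‖g t‖ : ℂ)) ^ 2 := by
      intro t _
      rw [inner_zpow_left, neg_neg, ContinuousLinearMap.adjoint_inner_left]
      rw [show A ((U ^ t) φ) = g t from rfl, inner_self_eq_norm_sq_to_K]
      rfl
    rw [Finset.sum_congr rfl he, hS]
    push_cast
    rfl
  have hhh : ⟪h, h⟫ = ∑ s ∈ T, ∑ t ∈ T, ⟪ContinuousLinearMap.adjoint A (g s),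
      (U ^ (s - t)) (ContinuousLinearMap.adjoint A (g t))⟫ := by
    rw [hh, sum_inner]
    apply Finset.sum_congr rfl
    intro s _
    rw [inner_sum]
    apply Finset.sum_congr rfl
    intro t _
    have e : (-t) - (-s) = s - t := by omega
    rw [inner_zpow, e]
  have hnormh : ‖h‖ ^ 2 ≤ 2 * M * S := by
    have h1 : ‖⟪h, h⟫‖ ≤ 2 * M * S := by
      rw [hhh, hS]
      exact key_bound hRes hM hbound T g
    have h2 : ‖⟪h, h⟫‖ = ‖h‖ ^ 2 := by
      rw [inner_self_eq_norm_sq_to_K (𝕜 := ℂ) h, norm_pow, RCLike.norm_ofReal, _root_.sq_abs]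
    rw [← h2]
    exact h1
  have hSle : S ≤ ‖h‖ * ‖φ‖ := by
    calc S ≤ |S| := le_abs_self S
      _ = ‖((S : ℝ) : ℂ)‖ := by rw [Complex.norm_real, Real.norm_eq_abs]
      _ = ‖⟪h, φ⟫‖ := by rw [hip]
      _ ≤ ‖h‖ * ‖φ‖ := norm_inner_le_norm _ _
  have hfin : S ^ 2 ≤ 2 * M * S * ‖φ‖ ^ 2 := by
    calc S ^ 2 ≤ (‖h‖ * ‖φ‖) ^ 2 := by
          apply pow_le_pow_left₀ hS0 hSle
      _ = ‖h‖ ^ 2 * ‖φ‖ ^ 2 := by ring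
      _ ≤ (2 * M * S) * ‖φ‖ ^ 2 :=
          mul_le_mul_of_nonneg_right hnormh (sq_nonneg _)
  rcases eq_or_lt_of_le hS0 with h0 | h0
  · have hnn : (0:ℝ) ≤ 2 * M * ‖φ‖ ^ 2 := mul_nonneg (by linarith) (sq_nonneg _)
    linarith
  · nlinarith [hfin, h0]

end KSP


open KS in
/-- **Corollary (sufficient condition for Kato smoothness).**
Let `U` be unitary on a Hilbert space `H`, `A ∈ L(H)`.
If `sup_{Im μ ≠ 0} ‖A R_U(μ) A*‖ < ∞`, then `A` is `U`-smooth: there is a constant `C`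
with `Σ_{t∈ℤ} ‖AU^tφ‖² ≤ C‖φ‖²` for all `φ ∈ H`. -/
theorem kato_smoothness_sufficient_condition
    {H : Type*} [NormedAddCommGroup H] [InnerProductSpace ℂ H] [CompleteSpace H]
    (U : H ≃ₗᵢ[ℂ] H) (A : H →L[ℂ] H)
    (Res : ℂ → H →L[ℂ] H) (hRes : KS.IsResolventFamily U Res)
    (hbound : ∃ M : ℝ, ∀ μ : ℂ, μ.im ≠ 0 →
      ‖A ∘L Res μ ∘L ContinuousLinearMap.adjoint A‖ ≤ M) :
    ∃ C : ℝ≥0, ∀ φ : H,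
      (∑' t : ℤ, (‖A ((U ^ t) φ)‖₊ : ℝ≥0∞) ^ 2) ≤ (C : ℝ≥0∞) * (‖φ‖₊ : ℝ≥0∞) ^ 2 := by
  obtain ⟨M₀, hM₀⟩ := hbound
  have hRes' : KSP.RCond U Res := hRes
  set M : ℝ := max M₀ 0 with hMdef
  have hM : 0 ≤ M := le_max_right _ _
  have hbound' : ∀ μ : ℂ, μ.im ≠ 0 →
      ‖A ∘L Res μ ∘L ContinuousLinearMap.adjoint A‖ ≤ M :=
    fun μ hμ => (hM₀ μ hμ).trans (le_max_left _ _)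
  refine ⟨Real.toNNReal (2 * M), fun φ => ?_⟩
  rw [ENNReal.tsum_eq_iSup_sum]
  apply iSup_le
  intro T
  have hreal : ∑ t ∈ T, ‖A ((U ^ t) φ)‖ ^ 2 ≤ 2 * M * ‖φ‖ ^ 2 :=
    KSP.finset_bound hRes' hM hbound' T φ
  have hnn : (∑ t ∈ T, ‖A ((U ^ t) φ)‖₊ ^ 2 : ℝ≥0) ≤ Real.toNNReal (2 * M) * ‖φ‖₊ ^ 2 := by
    rw [← NNReal.coe_le_coe]
    push_cast
    rw [Real.coe_toNNReal _ (by linarith)]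
    simpa using hreal
  calc (∑ t ∈ T, (‖A ((U ^ t) φ)‖₊ : ℝ≥0∞) ^ 2)
      = ((∑ t ∈ T, ‖A ((U ^ t) φ)‖₊ ^ 2 : ℝ≥0) : ℝ≥0∞) := by push_cast; rfl
    _ ≤ ((Real.toNNReal (2 * M) * ‖φ‖₊ ^ 2 : ℝ≥0) : ℝ≥0∞) := ENNReal.coe_le_coe.mpr hnn
    _ = (Real.toNNReal (2 * M) : ℝ≥0∞) * (‖φ‖₊ : ℝ≥0∞) ^ 2 := by push_cast; rfl
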